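/- Let ρ be a density matrix on C^N ⊗ C^M in normal form, i.e., with maximally mixed marginals Tr_B[ρ] = 𝟙/N and Tr_A[ρ] = 𝟙/M. Let {λ_μ}_{μ=1}^{N²−1} and {σ_ν}_{ν=1}^{M²−1} be traceless Hermitian matrices with Tr(λ_μ λ_{μ'}) = 2δ_{μμ'} and Tr(σ_ν σ_{ν'}) = 2δ_{νν'}, and define the correlation matrix T by T_{μν} = Tr[ρ (λ_μ ⊗ σ_ν)]. If the square of the Ky Fan norm of T (the sum of all singular values of T) satisfies ‖T‖²_KF > 4(N−1)(M−1)/(NM), then ρ is entangled. -/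

import Mathlib

open scoped Kronecker ComplexConjugate ComplexOrder Matrix

noncomputable section

/-- A density matrix: positive semidefinite with trace 1. -/
def IsDensity {n : Type} [Fintype n] [DecidableEq n] (ρ : Matrix n n ℂ) : Prop :=
  ρ.PosSemidef ∧ ρ.trace = 1

/-- Separability of a bipartite density matrix: a finite convex combination of
tensor (Kronecker) products of density matrices. -/
def Separable {n m : Type} [Fintype n] [DecidableEq n] [Fintype m] [DecidableEq m]
    (ρ : Matrix (n × m) (n × m) ℂ) : Prop :=
  ∃ (L : ℕ) (p : Fin L → ℝ) (A : Fin L → Matrix n n ℂ) (B : Fin L → Matrix m m ℂ),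
    (∀ i, 0 < p i) ∧ (∑ i, p i) = 1 ∧ (∀ i, IsDensity (A i)) ∧ (∀ i, IsDensity (B i)) ∧
    ρ = ∑ i, (p i : ℂ) • (A i ⊗ₖ B i)

/-- Partial trace over the first tensor factor. -/
def ptraceFst {k n : Type} [Fintype k] (ρ : Matrix (k × n) (k × n) ℂ) : Matrix n n ℂ :=
  fun i j => ∑ a, ρ (a, i) (a, j)

/-- Partial trace over the second tensor factor. -/
def ptraceSnd {n m : Type} [Fintype m] (ρ : Matrix (n × m) (n × m) ℂ) : Matrix n n ℂ :=
  fun i j => ∑ b, ρ (i, b) (j, b)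

/-- The rank-one projection |ψ⟩⟨ψ|. -/
def proj {n : Type} (ψ : n → ℂ) : Matrix n n ℂ := Matrix.vecMulVec ψ (star ψ)

/-- Partial transpose with respect to the first tensor factor. -/
def ptransposeFst {n m : Type} (ρ : Matrix (n × m) (n × m) ℂ) : Matrix (n × m) (n × m) ℂ :=
  fun x y => ρ (y.1, x.2) (x.1, y.2)

/-- The positive semidefinite square root of a positive semidefinite matrix
(the definition of `Matrix.PosSemidef.sqrt` in the older Mathlib, since removed). -/
def posSemidefSqrt {n 𝕜 : Type*} [Fintype n] [DecidableEq n] [RCLike 𝕜] {A : Matrix n n 𝕜}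
    (hA : A.PosSemidef) : Matrix n n 𝕜 :=
  hA.1.eigenvectorUnitary.1 * Matrix.diagonal ((↑) ∘ (√·) ∘ hA.1.eigenvalues) *
  (star hA.1.eigenvectorUnitary : Matrix n n 𝕜)

/-- The Ky Fan norm of a real matrix: the sum of its singular values, `Tr √(Tᵀ T)`. -/
def kyFanNorm {a b : Type} [Fintype a] [DecidableEq a] [Fintype b] [DecidableEq b]
    (T : Matrix a b ℝ) : ℝ :=
  (posSemidefSqrt (Matrix.posSemidef_conjTranspose_mul_self T)).trace

/-! ### Auxiliary lemmas -/

lemma trace_conj_diag {n : Type} [Fintype n] [DecidableEq n]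
    (V : Matrix n n ℝ) (hV : star V * V = 1) (f : n → ℝ) :
    (V * Matrix.diagonal f * star V).trace = ∑ i, f i := by
  rw [Matrix.trace_mul_comm, ← Matrix.mul_assoc, hV, Matrix.one_mul, Matrix.trace_diagonal]

/-- Variational characterization giving the existence of an optimal contraction `O`
for the Ky Fan norm. -/
lemma kyFan_key {a b : Type} [Fintype a] [DecidableEq a] [Fintype b] [DecidableEq b]
    (T : Matrix a b ℝ) :
    0 ≤ kyFanNorm T ∧ ∃ O : Matrix a b ℝ,
      (∀ x : b → ℝ, (O *ᵥ x) ⬝ᵥ (O *ᵥ x) ≤ x ⬝ᵥ x) ∧ kyFanNorm T = (Oᴴ * T).trace := by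
  set hS := Matrix.posSemidef_conjTranspose_mul_self T with hSdef
  set h := hS.1 with hdef
  set V : Matrix b b ℝ := (h.eigenvectorUnitary : Matrix b b ℝ) with hVdef
  have hVs : star V * V = 1 := Unitary.coe_star_mul_self h.eigenvectorUnitary
  have hVs' : V * star V = 1 := Unitary.coe_mul_star_self h.eigenvectorUnitary
  set d : b → ℝ := h.eigenvalues with hddef
  have hd : ∀ j, 0 ≤ d j := fun j => hS.eigenvalues_nonneg j
  have hspec : Tᴴ * T = V * Matrix.diagonal d * star V := by
    rw [h.spectral_theorem]
    rfl
  have hsqrt : posSemidefSqrt hS = V * Matrix.diagonal (fun j => Real.sqrt (d j)) * star V := by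
    simp only [posSemidefSqrt, RCLike.ofReal_real_eq_id]
    rfl
  have htr : kyFanNorm T = ∑ j, Real.sqrt (d j) := by
    rw [kyFanNorm, hsqrt, trace_conj_diag _ hVs]
  have hconj : ∀ f g : b → ℝ, (V * Matrix.diagonal f * star V) * (V * Matrix.diagonal g * star V)
      = V * Matrix.diagonal (fun j => f j * g j) * star V := by
    intro f g
    calc (V * Matrix.diagonal f * star V) * (V * Matrix.diagonal g * star V)
        = V * Matrix.diagonal f * (star V * V) * (Matrix.diagonal g * star V) := by
          simp only [Matrix.mul_assoc]
      _ = V * (Matrix.diagonal f * Matrix.diagonal g) * star V := by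
          rw [hVs]; simp only [Matrix.mul_one, Matrix.mul_assoc]
      _ = _ := by rw [Matrix.diagonal_mul_diagonal]
  set e : b → ℝ := fun j => if d j = 0 then 0 else (Real.sqrt (d j))⁻¹ with hedef
  set O : Matrix a b ℝ := T * (V * Matrix.diagonal e * star V) with hOdef
  have hsVT : star (V * Matrix.diagonal e * star V) = V * Matrix.diagonal e * star V := by
    simp [star_mul, Matrix.star_eq_conjTranspose, Matrix.diagonal_conjTranspose, Matrix.mul_assoc]
  have hOH : Oᴴ = (V * Matrix.diagonal e * star V) * Tᴴ := by
    rw [hOdef, Matrix.conjTranspose_mul, ← Matrix.star_eq_conjTranspose, hsVT]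
  have hed : ∀ j, e j * d j = Real.sqrt (d j) := by
    intro j
    by_cases hj : d j = 0
    · simp [hedef, hj]
    · have hj' : 0 < d j := lt_of_le_of_ne (hd j) (Ne.symm hj)
      have : Real.sqrt (d j) ≠ 0 := ne_of_gt (Real.sqrt_pos.mpr hj')
      simp only [hedef, if_neg hj]
      rw [← Real.mul_self_sqrt (hd j)]
      field_simp
      rw [Real.sqrt_sq (Real.sqrt_nonneg _)]
  have hOT : Oᴴ * T = V * Matrix.diagonal (fun j => e j * d j) * star V := by
    rw [hOH, Matrix.mul_assoc, hspec, hconj]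
  have hsVt : star V = Vᵀ := by
    rw [Matrix.star_eq_conjTranspose, Matrix.conjTranspose_eq_transpose_of_trivial]
  have hVVt : V * Vᵀ = 1 := by rw [← hsVt]; exact hVs'
  have hOO : Oᵀ * O = V * Matrix.diagonal (fun j => (e j * d j) * e j) * star V := by
    rw [← Matrix.conjTranspose_eq_transpose_of_trivial, hOH, hOdef]
    calc V * Matrix.diagonal e * star V * Tᴴ * (T * (V * Matrix.diagonal e * star V))
        = (V * Matrix.diagonal e * star V * (Tᴴ * T)) * (V * Matrix.diagonal e * star V) := by
          simp only [Matrix.mul_assoc]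
      _ = (V * Matrix.diagonal (fun j => e j * d j) * star V) *
            (V * Matrix.diagonal e * star V) := by rw [hspec, hconj]
      _ = _ := hconj _ _
  refine ⟨htr ▸ Finset.sum_nonneg fun j _ => Real.sqrt_nonneg _, O, ?_, ?_⟩
  · intro x
    have h1 : (O *ᵥ x) ⬝ᵥ (O *ᵥ x) = x ⬝ᵥ ((Oᵀ * O) *ᵥ x) := by
      calc (O *ᵥ x) ⬝ᵥ (O *ᵥ x) = (x ᵥ* Oᵀ) ⬝ᵥ (O *ᵥ x) := by rw [Matrix.vecMul_transpose]
        _ = x ⬝ᵥ (Oᵀ *ᵥ (O *ᵥ x)) := (Matrix.dotProduct_mulVec _ _ _).symm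
        _ = x ⬝ᵥ ((Oᵀ * O) *ᵥ x) := by rw [Matrix.mulVec_mulVec]
    set p : b → ℝ := fun j => (e j * d j) * e j with hpdef
    have hp1 : ∀ j, p j ≤ 1 := by
      intro j
      by_cases hj : d j = 0
      · simp [hpdef, hedef, hj]
      · have hj' : 0 < d j := lt_of_le_of_ne (hd j) (Ne.symm hj)
        have hsj : Real.sqrt (d j) ≠ 0 := ne_of_gt (Real.sqrt_pos.mpr hj')
        simp only [hpdef, hedef, if_neg hj]
        have : (Real.sqrt (d j))⁻¹ * d j * (Real.sqrt (d j))⁻¹ = 1 := by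
          rw [← Real.mul_self_sqrt (hd j)]; field_simp; rw [Real.sqrt_sq (Real.sqrt_nonneg _)]
        exact le_of_eq this
    set y : b → ℝ := Vᵀ *ᵥ x with hydef
    have hyy : y ⬝ᵥ y = x ⬝ᵥ x := by
      calc y ⬝ᵥ y = (x ᵥ* V) ⬝ᵥ y := by rw [hydef, Matrix.mulVec_transpose]
        _ = x ⬝ᵥ (V *ᵥ (Vᵀ *ᵥ x)) := (Matrix.dotProduct_mulVec _ _ _).symm
        _ = x ⬝ᵥ ((V * Vᵀ) *ᵥ x) := by rw [Matrix.mulVec_mulVec]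
        _ = x ⬝ᵥ x := by rw [hVVt, Matrix.one_mulVec]
    have h2 : x ⬝ᵥ ((Oᵀ * O) *ᵥ x) = y ⬝ᵥ (Matrix.diagonal p *ᵥ y) := by
      rw [hOO, hsVt]
      calc x ⬝ᵥ ((V * Matrix.diagonal p * Vᵀ) *ᵥ x)
          = x ⬝ᵥ (V *ᵥ (Matrix.diagonal p *ᵥ (Vᵀ *ᵥ x))) := by
            rw [Matrix.mulVec_mulVec, Matrix.mulVec_mulVec]
        _ = (x ᵥ* V) ⬝ᵥ (Matrix.diagonal p *ᵥ y) := by rw [Matrix.dotProduct_mulVec]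
        _ = y ⬝ᵥ (Matrix.diagonal p *ᵥ y) := by rw [← Matrix.mulVec_transpose]
    rw [h1, h2, ← hyy]
    unfold dotProduct
    refine Finset.sum_le_sum fun j _ => ?_
    rw [Matrix.mulVec_diagonal]
    calc y j * (p j * y j) = p j * (y j * y j) := by ring
      _ ≤ 1 * (y j * y j) := mul_le_mul_of_nonneg_right (hp1 j) (mul_self_nonneg _)
      _ = y j * y j := one_mul _
  · rw [htr, hOT, trace_conj_diag _ hVs]
    exact Finset.sum_congr rfl fun j _ => (hed j).symm

lemma trace_conj_diagC {n : Type} [Fintype n] [DecidableEq n]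
    (V : Matrix n n ℂ) (hV : star V * V = 1) (f : n → ℂ) :
    (V * Matrix.diagonal f * star V).trace = ∑ i, f i := by
  rw [Matrix.trace_mul_comm, ← Matrix.mul_assoc, hV, Matrix.one_mul, Matrix.trace_diagonal]

lemma conj_diag_mulC {n : Type} [Fintype n] [DecidableEq n]
    (V : Matrix n n ℂ) (hV : star V * V = 1) (f g : n → ℂ) :
    (V * Matrix.diagonal f * star V) * (V * Matrix.diagonal g * star V)
      = V * Matrix.diagonal (fun j => f j * g j) * star V := by
  calc (V * Matrix.diagonal f * star V) * (V * Matrix.diagonal g * star V)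
      = V * Matrix.diagonal f * (star V * V) * (Matrix.diagonal g * star V) := by
        simp only [Matrix.mul_assoc]
    _ = V * (Matrix.diagonal f * Matrix.diagonal g) * star V := by
        rw [hV]; simp only [Matrix.mul_one, Matrix.mul_assoc]
    _ = _ := by rw [Matrix.diagonal_mul_diagonal]

/-- For a density matrix, `Tr(A²)` is a real number at most 1. -/
lemma density_trace_sq {n : Type} [Fintype n] [DecidableEq n] {A : Matrix n n ℂ}
    (hA : IsDensity A) : ∃ r : ℝ, (A * A).trace = (r : ℂ) ∧ r ≤ 1 := by
  obtain ⟨hP, ht⟩ := hA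
  set h := hP.1 with hdef
  set V : Matrix n n ℂ := (h.eigenvectorUnitary : Matrix n n ℂ) with hVdef
  have hVs : star V * V = 1 := Unitary.coe_star_mul_self h.eigenvectorUnitary
  set d : n → ℝ := h.eigenvalues with hddef
  have hd : ∀ j, 0 ≤ d j := fun j => hP.eigenvalues_nonneg j
  have hspec : A = V * Matrix.diagonal (fun j => (d j : ℂ)) * star V := by
    rw [h.spectral_theorem]
    rfl
  have hsum : ∑ j, d j = 1 := by
    have : A.trace = ∑ j, (d j : ℂ) := by
      rw [hspec] at ht ⊢; rw [trace_conj_diagC _ hVs]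
    rw [ht] at this
    exact_mod_cast this.symm
  have hAA : (A * A).trace = ((∑ j, d j ^ 2 : ℝ) : ℂ) := by
    rw [hspec, conj_diag_mulC _ hVs, trace_conj_diagC _ hVs]
    push_cast
    exact Finset.sum_congr rfl fun j _ => by rw [sq]
  refine ⟨∑ j, d j ^ 2, hAA, ?_⟩
  calc ∑ j, d j ^ 2 ≤ ∑ j, d j := by
        refine Finset.sum_le_sum fun j _ => ?_
        have hle1 : d j ≤ 1 := hsum ▸ Finset.single_le_sum (fun i _ => hd i) (Finset.mem_univ j)
        nlinarith [hd j]
    _ = 1 := hsum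

/-- Trace of a product of two Hermitian matrices is real. -/
lemma trace_herm_mul_real {n : Type} [Fintype n] [DecidableEq n]
    {A B : Matrix n n ℂ} (hA : A.IsHermitian) (hB : B.IsHermitian) :
    (A * B).trace = (((A * B).trace.re : ℝ) : ℂ) := by
  have : (starRingEnd ℂ) ((A * B).trace) = (A * B).trace := by
    have h1 : ((A * B)ᴴ).trace = star ((A * B).trace) := Matrix.trace_conjTranspose _
    have h2 : (A * B)ᴴ = B * A := by rw [Matrix.conjTranspose_mul, hA.eq, hB.eq]
    rw [h2, Matrix.trace_mul_comm] at h1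
    exact h1.symm
  exact (Complex.conj_eq_iff_re.mp this).symm

/-- Bessel-type bound for the Bloch vector of a density matrix. -/
lemma bessel {N : ℕ} (hN : 0 < N) {A : Matrix (Fin N) (Fin N) ℂ} (hA : IsDensity A)
    {k : ℕ} (lam : Fin k → Matrix (Fin N) (Fin N) ℂ)
    (hlamH : ∀ μ, (lam μ).IsHermitian) (hlam0 : ∀ μ, (lam μ).trace = 0)
    (hlamO : ∀ μ μ', (lam μ * lam μ').trace = if μ = μ' then 2 else 0) :
    ∑ μ, ((A * lam μ).trace.re) ^ 2 ≤ 2 - 2 / N := by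
  have hNC : (N : ℂ) ≠ 0 := Nat.cast_ne_zero.mpr hN.ne'
  set c : Fin k → ℝ := fun μ => ((A * lam μ).trace).re with hcdef
  have hcr : ∀ μ, (A * lam μ).trace = ((c μ : ℝ) : ℂ) := fun μ =>
    trace_herm_mul_real hA.1.1 (hlamH μ)
  set X : Matrix (Fin N) (Fin N) ℂ := (N : ℂ)⁻¹ • (1 : Matrix (Fin N) (Fin N) ℂ) with hXdef
  set C : Matrix (Fin N) (Fin N) ℂ := ∑ μ, (((c μ : ℝ) : ℂ) / 2) • lam μ with hCdef
  set B : Matrix (Fin N) (Fin N) ℂ := A - X - C with hBdef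
  obtain ⟨r, hAA, hr⟩ := density_trace_sq hA
  have htA : A.trace = 1 := hA.2
  have htC : C.trace = 0 := by
    rw [hCdef, Matrix.trace_sum]
    simp [Matrix.trace_smul, hlam0]
  have hAX : (A * X).trace = (N : ℂ)⁻¹ := by
    rw [hXdef, Matrix.mul_smul, Matrix.mul_one, Matrix.trace_smul, htA, smul_eq_mul, mul_one]
  have hXA : (X * A).trace = (N : ℂ)⁻¹ := by rw [Matrix.trace_mul_comm]; exact hAX
  have hXX : (X * X).trace = (N : ℂ)⁻¹ := by
    rw [hXdef, Matrix.mul_smul, Matrix.smul_mul, Matrix.one_mul, smul_smul, Matrix.trace_smul,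
      Matrix.trace_one]
    simp only [smul_eq_mul, Fintype.card_fin]
    field_simp
  have hAC : (A * C).trace = ∑ μ, ((c μ : ℂ) ^ 2) / 2 := by
    rw [hCdef, Matrix.mul_sum, Matrix.trace_sum]
    refine Finset.sum_congr rfl fun μ _ => ?_
    rw [Matrix.mul_smul, Matrix.trace_smul, hcr μ, smul_eq_mul]
    ring
  have hCA : (C * A).trace = ∑ μ, ((c μ : ℂ) ^ 2) / 2 := by
    rw [Matrix.trace_mul_comm]; exact hAC
  have hXC : (X * C).trace = 0 := by
    rw [hXdef, Matrix.smul_mul, Matrix.one_mul, Matrix.trace_smul, htC, smul_zero]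
  have hCX : (C * X).trace = 0 := by rw [Matrix.trace_mul_comm]; exact hXC
  have hCC : (C * C).trace = ∑ μ, ((c μ : ℂ) ^ 2) / 2 := by
    rw [hCdef, Matrix.sum_mul, Matrix.trace_sum]
    refine Finset.sum_congr rfl fun μ _ => ?_
    rw [Matrix.smul_mul, Matrix.mul_sum, Matrix.trace_smul, Matrix.trace_sum]
    have : ∀ μ' : Fin k, (lam μ * (((c μ' : ℝ) : ℂ) / 2) • lam μ').trace
        = ((c μ' : ℂ) / 2) * (if μ = μ' then 2 else 0) := by
      intro μ'
      rw [Matrix.mul_smul, Matrix.trace_smul, hlamO, smul_eq_mul]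
    rw [Finset.sum_congr rfl fun μ' _ => this μ']
    simp only [mul_ite, mul_zero, Finset.sum_ite_eq, Finset.mem_univ, if_true]
    rw [smul_eq_mul]
    ring
  have hBH : B.IsHermitian := by
    have h1 : X.IsHermitian := by
      show Xᴴ = X
      rw [hXdef, Matrix.conjTranspose_smul]
      simp
    have h2 : C.IsHermitian := by
      show Cᴴ = C
      rw [hCdef, Matrix.conjTranspose_sum]
      refine Finset.sum_congr rfl fun μ _ => ?_
      rw [Matrix.conjTranspose_smul, (hlamH μ).eq]
      congr 1
      simp [Complex.star_def, Complex.conj_ofReal]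
    exact (hA.1.1.sub h1).sub h2
  have hBB : (B * B).trace = (r : ℂ) - (N : ℂ)⁻¹ - ∑ μ, ((c μ : ℂ) ^ 2) / 2 := by
    rw [hBdef]
    simp only [Matrix.sub_mul, Matrix.mul_sub, Matrix.trace_sub]
    rw [hAA, hAX, hXA, hAC, hCA, hXX, hXC, hCX, hCC]
    ring
  have hpos : 0 ≤ ((B * B).trace).re := by
    have hBe : B * B = Bᴴ * B := by rw [hBH.eq]
    have : (Bᴴ * B).trace = ∑ j, ∑ i, (starRingEnd ℂ) (B i j) * B i j := by
      simp [Matrix.trace, Matrix.mul_apply, Matrix.conjTranspose_apply, Matrix.diag]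
    rw [hBe, this]
    simp only [Complex.re_sum]
    refine Finset.sum_nonneg fun j _ => Finset.sum_nonneg fun i _ => ?_
    rw [← Complex.normSq_eq_conj_mul_self]
    simp [Complex.normSq_nonneg]
  have hre : ((B * B).trace).re = r - (N : ℝ)⁻¹ - ∑ μ, (c μ) ^ 2 / 2 := by
    rw [hBB]
    simp [Complex.re_sum, ← Complex.ofReal_pow]
  rw [hre] at hpos
  have hNR : (0:ℝ) < N := by exact_mod_cast hN
  have h2N : 2 / (N:ℝ) = 2 * (N:ℝ)⁻¹ := by ring
  rw [h2N]
  have hsum2 : ∑ μ, (c μ) ^ 2 / 2 = (∑ μ, (c μ) ^ 2) / 2 := by rw [Finset.sum_div]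
  rw [hsum2] at hpos
  linarith

theorem stmt4 (N M : ℕ)
    (ρ : Matrix (Fin N × Fin M) (Fin N × Fin M) ℂ) (hρ : IsDensity ρ)
    (hmargA : ptraceSnd ρ = ((N : ℂ))⁻¹ • 1)
    (hmargB : ptraceFst ρ = ((M : ℂ))⁻¹ • 1)
    (lam : Fin (N ^ 2 - 1) → Matrix (Fin N) (Fin N) ℂ)
    (sig : Fin (M ^ 2 - 1) → Matrix (Fin M) (Fin M) ℂ)
    (hlamH : ∀ μ, (lam μ).IsHermitian) (hlam0 : ∀ μ, (lam μ).trace = 0)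
    (hlamO : ∀ μ μ', (lam μ * lam μ').trace = if μ = μ' then 2 else 0)
    (hsigH : ∀ ν, (sig ν).IsHermitian) (hsig0 : ∀ ν, (sig ν).trace = 0)
    (hsigO : ∀ ν ν', (sig ν * sig ν').trace = if ν = ν' then 2 else 0)
    (T : Matrix (Fin (N ^ 2 - 1)) (Fin (M ^ 2 - 1)) ℝ)
    (hT : ∀ μ ν, (T μ ν : ℂ) = (ρ * (lam μ ⊗ₖ sig ν)).trace)
    (hKF : kyFanNorm T ^ 2 > 4 * ((N : ℝ) - 1) * ((M : ℝ) - 1) / ((N : ℝ) * M)) :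
    ¬ Separable ρ := by
  intro hsep
  obtain ⟨L, p, A, B, hp, hpsum, hAd, hBd, hρsum⟩ := hsep
  -- positivity of N and M
  have hN : 0 < N := by
    rcases Nat.eq_zero_or_pos N with h0 | h
    · exfalso
      have h1 := hρ.2
      subst h0
      simp [Matrix.trace] at h1
    · exact h
  have hM : 0 < M := by
    rcases Nat.eq_zero_or_pos M with h0 | h
    · exfalso
      have h1 := hρ.2
      subst h0
      simp [Matrix.trace] at h1
    · exact h
  have hNR : (0:ℝ) < N := by exact_mod_cast hN
  have hMR : (0:ℝ) < M := by exact_mod_cast hM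
  -- Bloch vectors
  set a : Fin L → Fin (N ^ 2 - 1) → ℝ := fun i μ => ((A i * lam μ).trace).re with hadef
  set b : Fin L → Fin (M ^ 2 - 1) → ℝ := fun i ν => ((B i * sig ν).trace).re with hbdef
  have hcrA : ∀ i μ, (A i * lam μ).trace = ((a i μ : ℝ) : ℂ) := fun i μ =>
    trace_herm_mul_real (hAd i).1.1 (hlamH μ)
  have hcrB : ∀ i ν, (B i * sig ν).trace = ((b i ν : ℝ) : ℂ) := fun i ν =>
    trace_herm_mul_real (hBd i).1.1 (hsigH ν)
  -- correlation matrix decomposition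
  have hTsum : ∀ μ ν, T μ ν = ∑ i, p i * (a i μ * b i ν) := by
    intro μ ν
    have hc : (T μ ν : ℂ) = ((∑ i, p i * (a i μ * b i ν) : ℝ) : ℂ) := by
      rw [hT μ ν, hρsum, Matrix.sum_mul, Matrix.trace_sum]
      push_cast
      refine Finset.sum_congr rfl fun i _ => ?_
      rw [Matrix.smul_mul, Matrix.trace_smul, ← Matrix.mul_kronecker_mul,
        Matrix.trace_kronecker, hcrA, hcrB, smul_eq_mul]
    exact_mod_cast hc
  obtain ⟨hKF0, O, hO1, hO2⟩ := kyFan_key T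
  -- trace identity
  have key : (Oᴴ * T).trace = ∑ i, p i * (a i ⬝ᵥ (O *ᵥ b i)) := by
    have lhs : (Oᴴ * T).trace = ∑ ν, ∑ μ, O μ ν * T μ ν := by
      simp [Matrix.trace, Matrix.diag, Matrix.mul_apply, Matrix.conjTranspose_apply]
    rw [lhs]
    have step1 : ∀ ν μ, O μ ν * T μ ν = ∑ i, p i * (a i μ * (O μ ν * b i ν)) := by
      intro ν μ
      rw [hTsum, Finset.mul_sum]
      exact Finset.sum_congr rfl fun i _ => by ring
    calc ∑ ν, ∑ μ, O μ ν * T μ ν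
        = ∑ ν, ∑ μ, ∑ i, p i * (a i μ * (O μ ν * b i ν)) := by
          exact Finset.sum_congr rfl fun ν _ => Finset.sum_congr rfl fun μ _ => step1 ν μ
      _ = ∑ ν, ∑ i, ∑ μ, p i * (a i μ * (O μ ν * b i ν)) :=
          Finset.sum_congr rfl fun ν _ => Finset.sum_comm
      _ = ∑ i, ∑ ν, ∑ μ, p i * (a i μ * (O μ ν * b i ν)) := Finset.sum_comm
      _ = ∑ i, p i * (a i ⬝ᵥ (O *ᵥ b i)) := by
          refine Finset.sum_congr rfl fun i _ => ?_
          rw [Finset.sum_comm]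
          simp only [dotProduct, Matrix.mulVec, Finset.mul_sum]
  -- bounds
  have h2N : 0 ≤ 2 - 2 / (N:ℝ) := by
    have h1 : (1:ℝ) ≤ N := by exact_mod_cast hN
    have : 2 / (N:ℝ) ≤ 2 := by
      rw [div_le_iff₀ hNR]; nlinarith
    linarith
  have h2M : 0 ≤ 2 - 2 / (M:ℝ) := by
    have h1 : (1:ℝ) ≤ M := by exact_mod_cast hM
    have : 2 / (M:ℝ) ≤ 2 := by
      rw [div_le_iff₀ hMR]; nlinarith
    linarith
  set K2 : ℝ := (2 - 2 / (N:ℝ)) * (2 - 2 / (M:ℝ)) with hK2def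
  have hK2nn : 0 ≤ K2 := mul_nonneg h2N h2M
  have hbound : ∀ i, a i ⬝ᵥ (O *ᵥ b i) ≤ Real.sqrt K2 := by
    intro i
    set w : Fin (N ^ 2 - 1) → ℝ := O *ᵥ b i with hwdef
    have hCS : (a i ⬝ᵥ w) ^ 2 ≤ (∑ μ, (a i μ) ^ 2) * (∑ μ, (w μ) ^ 2) :=
      Finset.sum_mul_sq_le_sq_mul_sq Finset.univ (a i) w
    have haa : ∑ μ, (a i μ) ^ 2 ≤ 2 - 2 / (N:ℝ) :=
      bessel hN (hAd i) lam hlamH hlam0 hlamO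
    have hbb : ∑ ν, (b i ν) ^ 2 ≤ 2 - 2 / (M:ℝ) :=
      bessel hM (hBd i) sig hsigH hsig0 hsigO
    have hww : ∑ μ, (w μ) ^ 2 ≤ ∑ ν, (b i ν) ^ 2 := by
      have := hO1 (b i)
      simpa [dotProduct, ← sq] using this
    have hwwnn : 0 ≤ ∑ μ, (w μ) ^ 2 := Finset.sum_nonneg fun ν _ => sq_nonneg _
    have hsq : (a i ⬝ᵥ w) ^ 2 ≤ K2 := by
      calc (a i ⬝ᵥ w) ^ 2 ≤ (∑ μ, (a i μ) ^ 2) * (∑ μ, (w μ) ^ 2) := hCS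
        _ ≤ (2 - 2 / (N:ℝ)) * (2 - 2 / (M:ℝ)) :=
            mul_le_mul haa (le_trans hww hbb) hwwnn h2N
        _ = K2 := rfl
    calc a i ⬝ᵥ w ≤ |a i ⬝ᵥ w| := le_abs_self _
      _ = Real.sqrt ((a i ⬝ᵥ w) ^ 2) := (Real.sqrt_sq_eq_abs _).symm
      _ ≤ Real.sqrt K2 := Real.sqrt_le_sqrt hsq
  have hKle : kyFanNorm T ≤ Real.sqrt K2 := by
    rw [hO2, key]
    calc ∑ i, p i * (a i ⬝ᵥ (O *ᵥ b i)) ≤ ∑ i, p i * Real.sqrt K2 := by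
          exact Finset.sum_le_sum fun i _ =>
            mul_le_mul_of_nonneg_left (hbound i) (hp i).le
      _ = Real.sqrt K2 := by rw [← Finset.sum_mul, hpsum, one_mul]
  have hfinal : kyFanNorm T ^ 2 ≤ K2 := by
    calc kyFanNorm T ^ 2 ≤ Real.sqrt K2 ^ 2 := by
          exact pow_le_pow_left₀ hKF0 hKle 2
      _ = K2 := Real.sq_sqrt hK2nn
  have heq : K2 = 4 * ((N : ℝ) - 1) * ((M : ℝ) - 1) / ((N : ℝ) * M) := by
    rw [hK2def]
    field_simp
    ring
  rw [heq] at hfinal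
  linarith
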